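/- No Catalan number is congruent to 9 modulo 16: for all n ≥ 0, C(n) ≢ 9 (mod 16). -/

import Mathlib

open Finset Nat

private def sdig (m : ℕ) : ℕ := (Nat.digits 2 m).sum

private lemma sdig_two_mul (t : ℕ) : sdig (2 * t) = sdig t := by
  rcases Nat.eq_zero_or_pos t with rfl | ht
  · rfl
  · rw [sdig, Nat.digits_def' (by norm_num : 1 < 2) (by omega)]
    simp [sdig, Nat.mul_div_cancel_left, Nat.mul_mod_right]

private lemma sdig_two_mul_add_one (t : ℕ) : sdig (2 * t + 1) = sdig t + 1 := by
  rw [sdig, Nat.digits_def' (by norm_num : 1 < 2) (by omega)]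
  have h1 : (2 * t + 1) % 2 = 1 := by omega
  have h2 : (2 * t + 1) / 2 = t := by omega
  rw [h1, h2]
  simp [sdig, add_comm]

private lemma sdig_le (m : ℕ) : sdig m ≤ m := by
  induction m using Nat.strong_induction_on with
  | _ m ih =>
    rcases Nat.even_or_odd m with ⟨t, rfl⟩ | ⟨t, rfl⟩
    · rcases Nat.eq_zero_or_pos t with rfl | ht
      · simp [sdig]
      · rw [show t + t = 2 * t by ring, sdig_two_mul]
        have := ih t (by omega); omega
    · rw [sdig_two_mul_add_one]
      have := ih t (by omega); omega

private lemma sdig_eq_zero {m : ℕ} (h : sdig m = 0) : m = 0 := by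
  induction m using Nat.strong_induction_on with
  | _ m ih =>
    rcases Nat.even_or_odd m with ⟨t, rfl⟩ | ⟨t, rfl⟩
    · rcases Nat.eq_zero_or_pos t with rfl | ht
      · rfl
      · rw [show t + t = 2 * t by ring, sdig_two_mul] at h
        have := ih t (by omega) h; omega
    · rw [sdig_two_mul_add_one] at h; omega

private lemma sdig_eq_one {m : ℕ} (h : sdig m = 1) : ∃ k, m = 2 ^ k := by
  induction m using Nat.strong_induction_on with
  | _ m ih =>
    rcases Nat.even_or_odd m with ⟨t, rfl⟩ | ⟨t, rfl⟩
    · rcases Nat.eq_zero_or_pos t with rfl | ht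
      · simp [sdig] at h
      · rw [show t + t = 2 * t by ring, sdig_two_mul] at h
        obtain ⟨k, rfl⟩ := ih t (by omega) h
        exact ⟨k + 1, by ring⟩
    · rw [sdig_two_mul_add_one] at h
      have ht : t = 0 := sdig_eq_zero (by omega)
      exact ⟨0, by omega⟩

private lemma sdig_succ (n : ℕ) : sdig n + 1 = sdig (n + 1) + (n + 1).factorization 2 := by
  induction n using Nat.strong_induction_on with
  | _ n ih =>
    rcases Nat.even_or_odd n with ⟨t, rfl⟩ | ⟨t, rfl⟩
    · rw [show t + t = 2 * t by ring, sdig_two_mul, show 2 * t + 1 = 2 * t + 1 from rfl,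
        sdig_two_mul_add_one, Nat.factorization_eq_zero_of_not_dvd (by omega)]
    · have h2 : (2 * t + 1) + 1 = 2 * (t + 1) := by ring
      rw [sdig_two_mul_add_one, h2, sdig_two_mul,
        Nat.factorization_mul (by norm_num) (by omega)]
      simp only [Finsupp.add_apply, Nat.Prime.factorization_self Nat.prime_two]
      have := ih t (by omega)
      omega

private lemma fact_factorization (m : ℕ) : (m !).factorization 2 = m - sdig m := by
  have h := Nat.Prime.sub_one_mul_multiplicity_factorial (n := m) Nat.prime_two
  rw [multiplicity_eq_factorization Nat.prime_two (Nat.factorial_ne_zero m)] at h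
  simpa [sdig] using h

private lemma catalan_ne_zero (n : ℕ) : catalan n ≠ 0 := by
  intro h
  have h1 := succ_mul_catalan_eq_centralBinom n
  rw [h, mul_zero] at h1
  exact Nat.centralBinom_ne_zero n h1.symm

private lemma catalan_val (n : ℕ) :
    (catalan n).factorization 2 + (n + 1).factorization 2 = sdig n := by
  have hfac : (n + 1) * catalan n * (n ! * n !) = (2 * n)! := by
    rw [succ_mul_catalan_eq_centralBinom, Nat.centralBinom]
    have h := Nat.choose_mul_factorial_mul_factorial (show n ≤ 2 * n by omega)
    simpa [show 2 * n - n = n by omega, mul_assoc] using h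
  have hC := catalan_ne_zero n
  have e1 := congrArg (fun x => x.factorization 2) hfac
  rw [Nat.factorization_mul (by positivity) (by positivity),
    Nat.factorization_mul (by omega) hC,
    Nat.factorization_mul (Nat.factorial_ne_zero n) (Nat.factorial_ne_zero n)] at e1
  simp only [Finsupp.add_apply] at e1
  rw [fact_factorization, fact_factorization, sdig_two_mul] at e1
  have h1 := sdig_le n
  have h2 : sdig n ≤ 2 * n := by omega
  omega

private lemma eight_dvd_choose {k x : ℕ} (hk : 2 ≤ k) (hx0 : x ≠ 0) (hxa : x ≤ 2 ^ (k + 1))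
    (hnd : ¬ 2 ^ (k - 1) ∣ x) : 8 ∣ (2 ^ (k + 1)).choose x := by
  have hmul : multiplicity 2 x ≤ k - 2 := by
    by_contra hcon
    push_neg at hcon
    exact hnd (dvd_trans (pow_dvd_pow 2 (by omega : k - 1 ≤ multiplicity 2 x))
      (pow_multiplicity_dvd 2 x))
  have he := Nat.Prime.emultiplicity_choose_prime_pow Nat.prime_two hxa hx0
  have h3 : (3 : ℕ∞) ≤ emultiplicity 2 ((2 ^ (k + 1)).choose x) := by
    rw [he]
    exact_mod_cast (by omega : 3 ≤ k + 1 - multiplicity 2 x)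
  exact_mod_cast pow_dvd_of_le_emultiplicity h3

private lemma choose_quarter {k : ℕ} (hk : 2 ≤ k) :
    4 ∣ (2 ^ (k + 1)).choose (2 ^ (k - 1)) ∧ ¬ 8 ∣ (2 ^ (k + 1)).choose (2 ^ (k - 1)) := by
  have hxa : 2 ^ (k - 1) ≤ 2 ^ (k + 1) := Nat.pow_le_pow_right (by norm_num) (by omega)
  have he := Nat.Prime.emultiplicity_choose_prime_pow Nat.prime_two hxa
    (by positivity : (0:ℕ) < 2 ^ (k - 1)).ne'
  rw [multiplicity_pow_self (by norm_num) (by simp [Nat.isUnit_iff])] at he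
  have h2 : emultiplicity 2 ((2 ^ (k + 1)).choose (2 ^ (k - 1))) = (2 : ℕ) := by
    rw [he]; congr 1; omega
  have := emultiplicity_eq_coe.mp h2
  simpa using this

private lemma cb_mod32 (k : ℕ) (hk : 2 ≤ k) : ((Nat.centralBinom (2 ^ k) : ZMod 32)) = 6 := by
  induction k, hk using Nat.le_induction with
  | base =>
    have h : Nat.centralBinom (2 ^ 2) = 70 := by decide
    rw [h]; decide
  | succ k hk ih =>
    set a := 2 ^ (k + 1) with ha'
    set b := 2 ^ (k - 1) with hb'
    have hb2 : 2 ≤ b := by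
      rw [hb']; calc 2 = 2 ^ 1 := rfl
                    _ ≤ 2 ^ (k - 1) := Nat.pow_le_pow_right (by norm_num) (by omega)
    have h2k : 2 ^ k = 2 * b := by
      rw [hb', ← pow_succ']; congr 1; omega
    have ha : a = 4 * b := by
      rw [ha', hb', show (4 : ℕ) = 2 ^ 2 by norm_num, ← pow_add]; congr 1; omega
    -- Vandermonde
    have hv : Nat.centralBinom a = ∑ i ∈ range (a + 1), ((a.choose i) ^ 2) := by
      rw [Nat.centralBinom, two_mul, Nat.add_choose_eq,
        Nat.sum_antidiagonal_eq_sum_range_succ (fun i j => a.choose i * a.choose j)]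
      refine sum_congr rfl fun i hi => ?_
      have hi' : i ≤ a := by have := mem_range.mp hi; omega
      rw [Nat.choose_symm hi', sq]
    have hcast : ((Nat.centralBinom a : ZMod 32)) =
        ∑ i ∈ range (a + 1), ((a.choose i : ZMod 32)) ^ 2 := by
      rw [hv]; push_cast; rfl
    have hSsub : ({0, b, 2*b, 3*b, 4*b} : Finset ℕ) ⊆ range (a + 1) := by
      intro x hx
      simp only [mem_insert, mem_singleton] at hx
      rw [mem_range, ha]
      rcases hx with rfl | rfl | rfl | rfl | rfl <;> omega
    have hsplit := Finset.sum_sdiff (f := fun i => ((a.choose i : ZMod 32)) ^ 2) hSsub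
    -- sdiff sum is zero
    have hzero : ∑ i ∈ range (a + 1) \ ({0, b, 2*b, 3*b, 4*b} : Finset ℕ),
        ((a.choose i : ZMod 32)) ^ 2 = 0 := by
      refine Finset.sum_eq_zero fun x hx => ?_
      rw [mem_sdiff, mem_range] at hx
      obtain ⟨hxlt, hxS⟩ := hx
      simp only [mem_insert, mem_singleton] at hxS
      push_neg at hxS
      obtain ⟨hx0, hx1, hx2, hx3, hx4⟩ := hxS
      have hnd : ¬ b ∣ x := by
        rintro ⟨c, rfl⟩
        have hc0 : c ≠ 0 := by rintro rfl; simp at hx0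
        have hc4 : c ≤ 4 := by
          have : b * c ≤ b * 4 := by rw [ha] at hxlt; omega
          exact Nat.le_of_mul_le_mul_left this (by omega)
        interval_cases c <;> omega
      have h8 := eight_dvd_choose hk hx0 (by rw [← ha', ha]; omega) (by rw [← hb']; exact hnd)
      obtain ⟨u, hu⟩ := h8
      have : ((a.choose x : ZMod 32)) ^ 2 = 32 * (2 * (u : ZMod 32) ^ 2) := by
        rw [hu]; push_cast; ring
      rw [this, show ((32 : ZMod 32)) = 0 by decide, zero_mul]
    -- S sum
    have hq := choose_quarter hk
    obtain ⟨u, hu⟩ := hq.1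
    have hunotdvd : ¬ 2 ∣ u := by
      rintro ⟨m, rfl⟩; exact hq.2 ⟨m, by omega⟩
    obtain ⟨m, hm⟩ : ∃ m, u = 2 * m + 1 := ⟨u / 2, by omega⟩
    have hfb : ((a.choose b : ZMod 32)) ^ 2 = 16 := by
      have : a.choose b = 8 * m + 4 := by rw [← ha', ← hb'] at hu; omega
      rw [this]
      have : ((8 * m + 4 : ℕ) : ZMod 32) ^ 2 = 32 * (2 * (m : ZMod 32) ^ 2 + 2 * m) + 16 := by
        push_cast; ring
      rw [this, show ((32 : ZMod 32)) = 0 by decide]; ring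
    have hf3b : a.choose (3 * b) = a.choose b := by
      have h3b : 3 * b ≤ a := by omega
      have := Nat.choose_symm h3b
      rw [show a - 3 * b = b by omega] at this
      exact this.symm
    have hf2b : a.choose (2 * b) = Nat.centralBinom (2 ^ k) := by
      rw [Nat.centralBinom, h2k]; congr 1
      rw [ha]; ring
    have hfa : a.choose (4 * b) = 1 := by rw [← ha, Nat.choose_self]
    have hSsum : ∑ i ∈ ({0, b, 2*b, 3*b, 4*b} : Finset ℕ), ((a.choose i : ZMod 32)) ^ 2 = 6 := by
      rw [sum_insert (by simp; omega), sum_insert (by simp; omega),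
        sum_insert (by simp; omega), sum_insert (by simp; omega), sum_singleton]
      rw [Nat.choose_zero_right, hfa, hf3b, hf2b, hfb, ih]
      decide
    rw [ha'] at hcast hsplit ⊢
    rw [hcast, ← hsplit, hzero, hSsum, zero_add]

private lemma odd_catalan {n : ℕ} (h : catalan n % 2 = 1) : ∃ k, n + 1 = 2 ^ k := by
  have h0 : (catalan n).factorization 2 = 0 :=
    Nat.factorization_eq_zero_of_not_dvd (by omega)
  have h1 := catalan_val n
  have h2 := sdig_succ n
  exact sdig_eq_one (by omega)

private lemma catalan_pow_mod {k : ℕ} (hk : 3 ≤ k) : catalan (2 ^ k - 1) % 16 = 13 := by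
  set n := 2 ^ k - 1 with hn
  have hn1 : n + 1 = 2 ^ k := by
    rw [hn]; have : 1 ≤ 2 ^ k := Nat.one_le_two_pow; omega
  have h1 := succ_mul_catalan_eq_centralBinom n
  have h2 := Nat.succ_mul_centralBinom_succ n
  have h3 : Nat.centralBinom (n + 1) = 2 * (2 * n + 1) * catalan n := by
    have : (n + 1) * Nat.centralBinom (n + 1) = (n + 1) * (2 * (2 * n + 1) * catalan n) := by
      rw [h2, ← h1]; ring
    exact Nat.eq_of_mul_eq_mul_left (by omega) this
  have hmod : Nat.centralBinom (n + 1) % 32 = 6 := by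
    have := cb_mod32 k (by omega)
    rw [← hn1] at this
    have h6 : ((6 : ℕ) : ZMod 32) = 6 := by norm_num
    rw [← h6] at this
    have := (ZMod.natCast_eq_natCast_iff _ _ _).mp this
    simpa [Nat.ModEq] using this
  -- 16 ∣ n + 1
  obtain ⟨s, hs⟩ : 8 ∣ n + 1 := by
    rw [hn1, show (8:ℕ) = 2 ^ 3 by norm_num]
    exact pow_dvd_pow 2 (by omega)
  have hs1 : 1 ≤ s := by omega
  obtain ⟨t, ht⟩ : ∃ t, s = t + 1 := ⟨s - 1, by omega⟩
  obtain ⟨q, r, hqr, hrlt⟩ : ∃ q r, catalan n = 16 * q + r ∧ r < 16 :=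
    ⟨catalan n / 16, catalan n % 16, by omega, by omega⟩
  have hexp : 2 * (2 * n + 1) * catalan n =
      512 * (t * q) + 32 * (t * r) + 480 * q + 30 * r := by
    have hnval : n = 8 * t + 7 := by omega
    rw [hqr, hnval]; ring
  rw [h3, hexp] at hmod
  have : r = 13 := by
    generalize t * q = A at hmod
    generalize t * r = B at hmod
    omega
  omega

/-- No Catalan number is congruent to `9` modulo `16`. -/
theorem catalan_not_nine_mod_sixteen (n : ℕ) : ¬ (catalan n ≡ 9 [MOD 16]) := by
  intro h
  have h' : catalan n % 16 = 9 := by simpa [Nat.ModEq] using h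
  have hodd : catalan n % 2 = 1 := by omega
  obtain ⟨k, hk⟩ := odd_catalan hodd
  rcases lt_or_ge k 3 with hk3 | hk3
  · interval_cases k
    · have : n = 0 := by omega
      subst this; rw [catalan_zero] at h'; omega
    · have : n = 1 := by omega
      subst this; rw [catalan_one] at h'; omega
    · have : n = 3 := by omega
      subst this; rw [catalan_three] at h'; omega
  · have hn : n = 2 ^ k - 1 := by omega
    have := catalan_pow_mod hk3
    rw [← hn] at this
    omega
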